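/- arXiv:1212.3022 — 4 statements merged into one kernel-verified Lean document; each statement's English description precedes it below -/
import Mathlib

section
/- The torsion submodule of an extension of scalars commutes with the extension: for H_1 a finitely generated free abelian group, H = H_1 ⊕ H_2 with H_2 free abelian, and M a finitely generated Z[H_1]-module, one has tor_{Z[H]}(M ⊗_{Z[H_1]} Z[H]) = (tor_{Z[H_1]} M) ⊗_{Z[H_1]} Z[H]. -/
/-!
STATEMENT 4: The torsion submodule of an extension of scalars commutes with the
extension: for `H₁` a finitely generated free abelian group, `H = H₁ ⊕ H₂` with
`H₂` free abelian, and `M` a finitely generated `ℤ[H₁]`-module, one has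
`tor_{ℤ[H]}(M ⊗_{ℤ[H₁]} ℤ[H]) = (tor_{ℤ[H₁]} M) ⊗_{ℤ[H₁]} ℤ[H]`.

We realize `H₁ = ℤ^{n₁}`, `H₂ = ℤ^{n₂}` and `H = H₁ × H₂`; the inclusion
`ℤ[H₁] ⊆ ℤ[H]` is induced by `h ↦ (h, 0)`, making `ℤ[H]` a `ℤ[H₁]`-algebra.
The right-hand side is interpreted, as usual, as the image of
`(tor M) ⊗ ℤ[H]` inside `M ⊗ ℤ[H]`, i.e. the base change
`(Submodule.torsion _ M).baseChange`.
-/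

open TensorProduct

noncomputable section

variable (n₁ n₂ : ℕ)

/-- `ℤ[H₁]` where `H₁ = ℤ^{n₁}`. -/
abbrev R1 : Type := AddMonoidAlgebra ℤ (Fin n₁ → ℤ)

/-- `ℤ[H]` where `H = H₁ ⊕ H₂ = ℤ^{n₁} × ℤ^{n₂}`. -/
abbrev RH : Type := AddMonoidAlgebra ℤ ((Fin n₁ → ℤ) × (Fin n₂ → ℤ))

/-- `ℤ[H₁]` is a subring of `ℤ[H]` via `h ↦ (h, 0)`. -/
instance : Algebra (R1 n₁) (RH n₁ n₂) :=
  (AddMonoidAlgebra.mapDomainRingHom ℤ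
    (AddMonoidHom.inl (Fin n₁ → ℤ) (Fin n₂ → ℤ))).toAlgebra

/-! ### Auxiliary results: `ℤ[H]` is a free (hence flat) `ℤ[H₁]`-module -/

/-- The `ℤ`-linear "currying" equivalence `ℤ[H₁ × H₂] ≃ (H₂ →₀ ℤ[H₁])`. -/
def e₀ : RH n₁ n₂ ≃ₗ[ℤ] ((Fin n₂ → ℤ) →₀ R1 n₁) :=
  ((AddMonoidAlgebra.coeffLinearEquiv ℤ).trans ((Finsupp.domLCongr (Equiv.prodComm _ _)).trans
    (Finsupp.finsuppProdLEquiv ℤ))).trans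
    (Finsupp.mapRange.linearEquiv (AddMonoidAlgebra.coeffLinearEquiv ℤ).symm)

lemma prodLEquiv_single {α β M R : Type*} [Semiring R] [AddCommMonoid M] [Module R M]
    (x : α) (y : β) (v : M) :
    Finsupp.finsuppProdLEquiv R (Finsupp.single (x, y) v)
      = Finsupp.single x (Finsupp.single y v) := by
  classical
  ext a b
  show (Finsupp.single (x, y) v) (a, b) = _
  rcases eq_or_ne x a with rfl | hx
  · rcases eq_or_ne y b with rfl | hy
    · simp
    · rw [Finsupp.single_eq_of_ne (by simp [hy.symm]), Finsupp.single_eq_same,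
        Finsupp.single_eq_of_ne hy.symm]
  · rw [Finsupp.single_eq_of_ne (by simp [hx.symm]), Finsupp.single_eq_of_ne hx.symm, Finsupp.coe_zero,
      Pi.zero_apply]

lemma e₀_single (p : (Fin n₁ → ℤ) × (Fin n₂ → ℤ)) (v : ℤ) :
    e₀ n₁ n₂ (AddMonoidAlgebra.single p v)
      = Finsupp.single p.2 (AddMonoidAlgebra.single p.1 v) := by
  show Finsupp.mapRange.linearEquiv (AddMonoidAlgebra.coeffLinearEquiv ℤ).symm
    ((Finsupp.finsuppProdLEquiv ℤ) ((Finsupp.domLCongr (Equiv.prodComm _ _))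
    (Finsupp.single p v : (Fin n₁ → ℤ) × (Fin n₂ → ℤ) →₀ ℤ))) = _
  rw [Finsupp.domLCongr_single, prodLEquiv_single]
  rw [Finsupp.mapRange.linearEquiv_apply, Finsupp.mapRange_single]
  rfl

lemma e₀_smul (c : R1 n₁) (x : RH n₁ n₂) : e₀ n₁ n₂ (c • x) = c • e₀ n₁ n₂ x := by
  induction x using AddMonoidAlgebra.induction_linear with
  | zero => simp
  | add f g hf hg => rw [smul_add, map_add, map_add, smul_add, hf, hg]
  | single p d =>
    induction c using AddMonoidAlgebra.induction_linear with
    | zero => simp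
    | add f g hf hg => rw [add_smul, map_add, add_smul, hf, hg]
    | single a r =>
      have hsmul : (AddMonoidAlgebra.single a r : R1 n₁) • (AddMonoidAlgebra.single p d : RH n₁ n₂)
          = AddMonoidAlgebra.single ((a, 0) + p) (r * d) := by
        rw [Algebra.smul_def]
        have halg : (algebraMap (R1 n₁) (RH n₁ n₂)) (AddMonoidAlgebra.single a r)
            = AddMonoidAlgebra.single (a, 0) r := by
          show AddMonoidAlgebra.mapDomain (AddMonoidHom.inl (Fin n₁ → ℤ) (Fin n₂ → ℤ))
            (AddMonoidAlgebra.single a r) = _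
          rw [AddMonoidAlgebra.mapDomain_single]
          rfl
        rw [halg, AddMonoidAlgebra.single_mul_single]
      show e₀ n₁ n₂
          ((AddMonoidAlgebra.single a r : R1 n₁) • (AddMonoidAlgebra.single p d : RH n₁ n₂))
        = (AddMonoidAlgebra.single a r : R1 n₁) • e₀ n₁ n₂ (AddMonoidAlgebra.single p d)
      rw [hsmul, e₀_single, e₀_single, Finsupp.smul_single, smul_eq_mul,
        AddMonoidAlgebra.single_mul_single]
      simp

/-- The `ℤ[H₁]`-linear equivalence `ℤ[H] ≃ (H₂ →₀ ℤ[H₁])`. -/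
def eR : RH n₁ n₂ ≃ₗ[R1 n₁] ((Fin n₂ → ℤ) →₀ R1 n₁) :=
  ((e₀ n₁ n₂).toAddEquiv).toLinearEquiv (e₀_smul n₁ n₂)

instance : Module.Free (R1 n₁) (RH n₁ n₂) := Module.Free.of_equiv (eR n₁ n₂).symm

/-! ### Auxiliary results: general facts about torsion and base change -/

/-- A finitely generated torsion-free module over a domain embeds in a free module. -/
lemma exists_injective_into_free (R M : Type*) [CommRing R] [IsDomain R] [AddCommGroup M]
    [Module R M] [Module.Finite R M] [NoZeroSMulDivisors R M] :
    ∃ (N : Submodule R M) (f : M →ₗ[R] N), Module.Free R N ∧ Function.Injective f := by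
  classical
  obtain ⟨n, s, hs⟩ := Module.Finite.exists_fin (R := R) (M := M)
  obtain ⟨I, hli, hI⟩ := exists_maximal_linearIndepOn R s
  set N : Submodule R M := Submodule.span R (Set.range fun x : I => s x) with hN
  have hfree : Module.Free R N := Module.Free.of_basis (Module.Basis.span hli)
  have himg : (Set.range fun x : I => s x) = s '' I := by
    rw [Set.image_eq_range]
  set g : Fin n → R := fun i => if h : i ∈ I then 1 else (hI i h).choose with hg
  have hgne : ∀ i, g i ≠ 0 := by
    intro i
    by_cases h : i ∈ I
    · simp [hg, h]
    · simpa [hg, h] using (hI i h).choose_spec.1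
  set c : R := ∏ i : Fin n, g i with hc
  have hcne : c ≠ 0 := Finset.prod_ne_zero_iff.mpr fun i _ => hgne i
  have hmem : ∀ x : M, c • x ∈ N := by
    intro x
    have hx : x ∈ Submodule.span R (Set.range s) := by rw [hs]; trivial
    refine Submodule.span_induction (fun y hy => ?_) (by simp) (fun y z _ _ hy hz => by
      rw [smul_add]; exact N.add_mem hy hz) (fun r y _ hy => by
      rw [smul_comm]; exact N.smul_mem r hy) hx
    obtain ⟨i, rfl⟩ := hy
    have hsplit : c = g i * ∏ j ∈ Finset.univ.erase i, g j :=
      (Finset.mul_prod_erase Finset.univ g (Finset.mem_univ i)).symm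
    rw [hsplit, mul_comm, mul_smul]
    refine N.smul_mem _ ?_
    by_cases h : i ∈ I
    · have : g i = 1 := by simp [hg, h]
      rw [this, one_smul]
      exact Submodule.subset_span ⟨⟨i, h⟩, rfl⟩
    · have : g i = (hI i h).choose := by simp [hg, h]
      rw [this, hN, himg]
      exact (hI i h).choose_spec.2
  refine ⟨N, (LinearMap.lsmul R M c).codRestrict N hmem, hfree, ?_⟩
  intro x y hxy
  have : c • x = c • y := congrArg Subtype.val hxy
  exact smul_right_injective M hcne this

/-- Base change of a finitely generated torsion-free module along a flat algebra map between
domains is torsion-free. -/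
lemma nzsd_baseChange {R A M : Type*} [CommRing R] [IsDomain R] [CommRing A] [IsDomain A]
    [Algebra R A] [Module.Flat R A] [AddCommGroup M] [Module R M] [Module.Finite R M]
    [NoZeroSMulDivisors R M] :
    NoZeroSMulDivisors A (A ⊗[R] M) := by
  obtain ⟨N, f, hfree, hinj⟩ := exists_injective_into_free R M
  haveI := hfree
  have h2 : Function.Injective (f.baseChange A) := by
    have : ⇑(f.baseChange A) = ⇑(f.lTensor A) := LinearMap.baseChange_eq_ltensor f
    rw [this]
    exact Module.Flat.lTensor_preserves_injective_linearMap f hinj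
  refine ⟨fun {a x} hax => ?_⟩
  by_contra h
  push_neg at h
  obtain ⟨ha, hx⟩ := h
  have h3 : a • (f.baseChange A x) = 0 := by rw [← map_smul, hax, map_zero]
  rcases smul_eq_zero.mp h3 with h | h
  · exact ha h
  · exact hx (h2 (by rw [h, map_zero]))

lemma range_baseChange_subtype {R A M : Type*} [CommRing R] [CommRing A] [Algebra R A]
    [AddCommGroup M] [Module R M] (p : Submodule R M) :
    LinearMap.range (p.subtype.baseChange A) = p.baseChange A := by
  apply le_antisymm
  · rintro x ⟨y, rfl⟩
    induction y with
    | zero => simp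
    | tmul a m => simpa using Submodule.tmul_mem_baseChange_of_mem a m.2
    | add y z hy hz => rw [map_add]; exact Submodule.add_mem _ hy hz
  · exact le_rfl

/-- Torsion commutes with base change along an injective flat algebra map between domains. -/
theorem torsion_baseChange_general {R A M : Type*} [CommRing R] [IsDomain R] [CommRing A]
    [IsDomain A] [Algebra R A] [Module.Flat R A] [AddCommGroup M] [Module R M]
    [Module.Finite R M] (halg : Function.Injective (algebraMap R A)) :
    Submodule.torsion A (A ⊗[R] M) = (Submodule.torsion R M).baseChange A := by
  set T := Submodule.torsion R M with hT
  apply le_antisymm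
  · intro x hx
    obtain ⟨⟨s, hs⟩, hsx⟩ := (Submodule.mem_torsion_iff _).mp hx
    rw [Submonoid.smul_def] at hsx
    haveI : NoZeroSMulDivisors R (M ⧸ T) :=
      noZeroSMulDivisors_iff_right_eq_zero_of_smul.mpr fun r hr m hm => by
        have hmem : m ∈ Submodule.torsion R (M ⧸ T) :=
          (Submodule.mem_torsion_iff _).mpr ⟨⟨r, mem_nonZeroDivisors_of_ne_zero hr⟩, hm⟩
        have h : Submodule.torsion R (M ⧸ T) = ⊥ := Submodule.QuotientTorsion.torsion_eq_bot
        rw [h] at hmem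
        exact (Submodule.mem_bot R).mp hmem
    haveI : NoZeroSMulDivisors A (A ⊗[R] (M ⧸ T)) := nzsd_baseChange
    have hgx : (T.mkQ.baseChange A) x = 0 := by
      have h1 : s • (T.mkQ.baseChange A) x = 0 := by
        rw [← map_smul, hsx, map_zero]
      rcases smul_eq_zero.mp h1 with h | h
      · exact absurd h (nonZeroDivisors.ne_zero hs)
      · exact h
    have hex := lTensor_exact A (LinearMap.exact_subtype_mkQ T) (Submodule.mkQ_surjective T)
    have h0 : (T.mkQ.lTensor A) x = 0 := by
      have : ⇑(T.mkQ.baseChange A) = ⇑(T.mkQ.lTensor A) := LinearMap.baseChange_eq_ltensor _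
      rw [← this]
      exact hgx
    obtain ⟨y, hy⟩ := (hex x).mp h0
    rw [← range_baseChange_subtype]
    refine ⟨y, ?_⟩
    have : ⇑(T.subtype.baseChange A) = ⇑(T.subtype.lTensor A) := LinearMap.baseChange_eq_ltensor _
    rw [this]
    exact hy
  · rw [Submodule.baseChange_eq_span, Submodule.span_le]
    rintro x hx
    rw [Submodule.map_coe] at hx
    obtain ⟨m, hm, rfl⟩ := hx
    obtain ⟨⟨r, hr⟩, hrm⟩ := (Submodule.mem_torsion_iff _).mp hm
    rw [Submonoid.smul_def] at hrm
    refine (Submodule.mem_torsion_iff _).mpr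
      ⟨⟨algebraMap R A r, mem_nonZeroDivisors_of_ne_zero fun h0 =>
        nonZeroDivisors.ne_zero hr (halg (by rw [h0, map_zero]))⟩, ?_⟩
    rw [Submonoid.smul_def]
    show algebraMap R A r • ((1 : A) ⊗ₜ[R] m) = 0
    rw [algebraMap_smul, ← tmul_smul, hrm, tmul_zero]

instance : IsDomain (R1 n₁) := NoZeroDivisors.to_isDomain _

instance : IsDomain (RH n₁ n₂) := NoZeroDivisors.to_isDomain _

lemma algebraMap_R1_RH_injective :
    Function.Injective (algebraMap (R1 n₁) (RH n₁ n₂)) := by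
  have : ⇑(algebraMap (R1 n₁) (RH n₁ n₂))
      = AddMonoidAlgebra.mapDomain (AddMonoidHom.inl (Fin n₁ → ℤ) (Fin n₂ → ℤ)) := rfl
  rw [this]
  exact AddMonoidAlgebra.mapDomain_injective fun a b h => congrArg Prod.fst h

theorem torsion_baseChange
    (M : Type*) [AddCommGroup M] [Module (R1 n₁) M] [Module.Finite (R1 n₁) M] :
    Submodule.torsion (RH n₁ n₂) ((RH n₁ n₂) ⊗[R1 n₁] M) =
      (Submodule.torsion (R1 n₁) M).baseChange (RH n₁ n₂) := by
  exact torsion_baseChange_general (algebraMap_R1_RH_injective n₁ n₂)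

end
end

section
/- Let Δ be a nonconstant Laurent polynomial in n ≥ 2 variables over Z. The Newton polytope of Δ is a line segment if and only if the zero locus V(Δ) ⊂ (C*)^n is a finite union of parallel codimension-one translated subtori of (C*)^n. -/
/-!
STATEMENT 6: Let `Δ` be a nonconstant Laurent polynomial in `n ≥ 2` variables
over `ℤ`.  The Newton polytope of `Δ` is a line segment if and only if the
zero locus `V(Δ) ⊂ (ℂ*)^n` is a finite (nonempty) union of parallel
codimension-one translated subtori of `(ℂ*)^n`.

A codimension-one subtorus is `{ρ : ρ^h = 1}` for a primitive `h ∈ ℤ^n`,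
`h ≠ 0`; its cosets are the sets `{ρ : ρ^h = z}` with `z ∈ ℂ*`; cosets of one
and the same such subtorus are parallel.  The Newton polytope (the convex hull
of the exponents of `Δ`) is a line segment iff the exponents are collinear and
at least two of them occur.
-/

/-- Laurent polynomials `ℤ[t₁^{±1},…,t_n^{±1}] = ℤ[ℤ^n]`. -/
abbrev LaurentRing (n : ℕ) : Type := AddMonoidAlgebra ℤ (Fin n → ℤ)

/-- Evaluation of a Laurent polynomial at a point of the torus `(ℂ*)^n`. -/
noncomputable def evalT {n : ℕ} (p : LaurentRing n) (ρ : Fin n → ℂˣ) : ℂ :=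
  p.coeff.sum fun h a => (a : ℂ) * ∏ i, ((ρ i : ℂ) ^ (h i))

/-- The zero locus of `Δ` in the torus `(ℂ*)^n`. -/
def V {n : ℕ} (Δ : LaurentRing n) : Set (Fin n → ℂˣ) := {ρ | evalT Δ ρ = 0}

/-- The monomial character `ρ ↦ ρ^h` of the torus. -/
noncomputable def torPow {n : ℕ} (ρ : Fin n → ℂˣ) (h : Fin n → ℤ) : ℂˣ :=
  ∏ i, (ρ i) ^ (h i)

/-- A primitive vector of `ℤ^n` (its coordinates have gcd one). -/
def IsPrimitiveVec {n : ℕ} (h : Fin n → ℤ) : Prop :=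
  ∀ d : ℤ, (∀ i, d ∣ h i) → IsUnit d

/-- The Newton polytope of `Δ` is a line segment: the exponents of `Δ` are
collinear and at least two exponents occur. -/
def NewtonSegment {n : ℕ} (Δ : LaurentRing n) : Prop :=
  (∃ (g v : Fin n → ℤ), v ≠ 0 ∧
    ∀ g' ∈ Δ.coeff.support, ∃ k : ℤ, g' = g + k • v) ∧ 2 ≤ Δ.coeff.support.card


open Polynomial Matrix Finset

section OneVar

variable {α : Type*}

/-- auxiliary polynomial -/
noncomputable def polyOf (s : Finset α) (coef : α → ℂ) (ex : α → ℤ) (M : ℤ) : ℂ[X] :=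
  ∑ x ∈ s, Polynomial.C (coef x) * Polynomial.X ^ (ex x + M).toNat

lemma polyOf_eval {s : Finset α} {coef : α → ℂ} {ex : α → ℤ} {M : ℤ}
    (hM : ∀ x ∈ s, 0 ≤ ex x + M) (σ : ℂˣ) :
    (polyOf s coef ex M).eval (σ : ℂ) = (σ : ℂ) ^ M * ∑ x ∈ s, coef x * (σ : ℂ) ^ ex x := by
  rw [polyOf, Polynomial.eval_finset_sum, Finset.mul_sum]
  refine Finset.sum_congr rfl fun x hx => ?_
  have h0 : (σ : ℂ) ≠ 0 := σ.ne_zero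
  rw [Polynomial.eval_mul, Polynomial.eval_C, Polynomial.eval_pow, Polynomial.eval_X,
    ← zpow_natCast, Int.toNat_of_nonneg (hM x hx), zpow_add₀ h0]
  ring

lemma polyOf_coeff {s : Finset α} {coef : α → ℂ} {ex : α → ℤ} {M : ℤ}
    (hM : ∀ x ∈ s, 0 ≤ ex x + M) (hinj : Set.InjOn ex s) {x0 : α} (hx0 : x0 ∈ s) :
    (polyOf s coef ex M).coeff (ex x0 + M).toNat = coef x0 := by
  rw [polyOf, Polynomial.finset_sum_coeff]
  rw [Finset.sum_eq_single x0]
  · simp [Polynomial.coeff_C_mul, Polynomial.coeff_X_pow]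
  · intro x hx hxne
    have hne : (ex x0 + M).toNat ≠ (ex x + M).toNat := by
      intro hEq
      apply hxne
      apply hinj hx hx0
      have h1 := Int.toNat_of_nonneg (hM x hx)
      have h2 := Int.toNat_of_nonneg (hM x0 hx0)
      omega
    simp [Polynomial.coeff_C_mul, Polynomial.coeff_X_pow, hne]
  · intro h; exact absurd hx0 h

lemma lzero_coef {s : Finset α} {coef : α → ℂ} {ex : α → ℤ}
    (hinj : Set.InjOn ex s)
    (hz : ∀ σ : ℂˣ, ∑ x ∈ s, coef x * (σ : ℂ) ^ ex x = 0) :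
    ∀ x ∈ s, coef x = 0 := by
  rcases s.eq_empty_or_nonempty with rfl | hs
  · simp
  set M : ℤ := -(s.image ex).min' (hs.image ex) with hMdef
  have hM : ∀ x ∈ s, 0 ≤ ex x + M := by
    intro x hx
    have : (s.image ex).min' (hs.image ex) ≤ ex x :=
      Finset.min'_le _ _ (Finset.mem_image_of_mem ex hx)
    omega
  have hP : polyOf s coef ex M = 0 := by
    apply Polynomial.eq_zero_of_infinite_isRoot
    apply Set.Infinite.mono (s := {(0 : ℂ)}ᶜ)
    · intro x hx
      have hx0 : x ≠ 0 := hx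
      have hev := polyOf_eval (coef := coef) hM (Units.mk0 x hx0)
      simp only [Units.val_mk0] at hev
      have hzz := hz (Units.mk0 x hx0)
      simp only [Units.val_mk0] at hzz
      show Polynomial.IsRoot _ x
      rw [Polynomial.IsRoot, hev, hzz, mul_zero]
    · exact Set.Finite.infinite_compl (Set.finite_singleton 0)
  intro x hx
  have hco := polyOf_coeff (coef := coef) hM hinj hx
  rw [hP] at hco
  simpa using hco.symm

lemma lzero_finite {s : Finset α} {coef : α → ℂ} {ex : α → ℤ}
    (hinj : Set.InjOn ex s) (hne : ∃ x ∈ s, coef x ≠ 0) :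
    {σ : ℂˣ | ∑ x ∈ s, coef x * (σ : ℂ) ^ ex x = 0}.Finite := by
  obtain ⟨x0, hx0, hc0⟩ := hne
  have hs : s.Nonempty := ⟨x0, hx0⟩
  set M : ℤ := -(s.image ex).min' (hs.image ex) with hMdef
  have hM : ∀ x ∈ s, 0 ≤ ex x + M := by
    intro x hx
    have : (s.image ex).min' (hs.image ex) ≤ ex x :=
      Finset.min'_le _ _ (Finset.mem_image_of_mem ex hx)
    omega
  have hP : polyOf s coef ex M ≠ 0 := by
    intro h
    have hco := polyOf_coeff (coef := coef) hM hinj hx0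
    rw [h] at hco
    simp at hco
    exact hc0 hco.symm
  have hfin := Polynomial.finite_setOf_isRoot hP
  apply Set.Finite.subset (hfin.preimage (f := (Units.val : ℂˣ → ℂ)) (Units.val_injective.injOn))
  intro σ hσ
  have hev := polyOf_eval (coef := coef) hM σ
  simp only [Set.mem_setOf_eq] at hσ
  simp [Set.mem_preimage, Polynomial.IsRoot, hev, hσ]

lemma lzero_exists {s : Finset α} {coef : α → ℂ} {ex : α → ℤ}
    (hinj : Set.InjOn ex s)
    (h2 : 2 ≤ (s.filter fun x => coef x ≠ 0).card) :
    ∃ σ : ℂˣ, ∑ x ∈ s, coef x * (σ : ℂ) ^ ex x = 0 := by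
  classical
  set t := s.filter fun x => coef x ≠ 0 with ht
  have hts : t ⊆ s := Finset.filter_subset _ _
  have hsum : ∀ σ : ℂˣ, ∑ x ∈ t, coef x * (σ : ℂ) ^ ex x
      = ∑ x ∈ s, coef x * (σ : ℂ) ^ ex x := by
    intro σ
    apply Finset.sum_filter_of_ne
    intro x _ hx hc
    exact hx (by simp [hc])
  have htne : t.Nonempty := Finset.card_pos.mp (by omega)
  obtain ⟨x0, hx0t, hx0min⟩ := Finset.exists_min_image t ex htne
  set M : ℤ := -(ex x0) with hMdef
  have hM : ∀ x ∈ t, 0 ≤ ex x + M := fun x hx => by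
    have := hx0min x hx; omega
  have hinjt : Set.InjOn ex t := hinj.mono (by exact_mod_cast hts)
  have hc0 : (polyOf t coef ex M).coeff 0 ≠ 0 := by
    have h00 : ((ex x0 + M).toNat : ℕ) = 0 := by simp [hMdef]
    have hco := polyOf_coeff (coef := coef) hM hinjt hx0t
    rw [h00] at hco
    rw [hco]
    exact (Finset.mem_filter.mp hx0t).2
  obtain ⟨x1, hx1t, hx1ne⟩ := Finset.exists_mem_ne (s := t) (by omega) x0
  have hk1 : 0 < (ex x1 + M).toNat := by
    have h1 : ex x0 ≤ ex x1 := hx0min x1 hx1t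
    have h2' : ex x0 ≠ ex x1 := fun h => hx1ne (hinjt hx1t hx0t h.symm)
    omega
  have hcoeff1 : (polyOf t coef ex M).coeff (ex x1 + M).toNat ≠ 0 := by
    rw [polyOf_coeff hM hinjt hx1t]
    exact (Finset.mem_filter.mp hx1t).2
  have hdeg : 0 < (polyOf t coef ex M).natDegree :=
    lt_of_lt_of_le hk1 (Polynomial.le_natDegree_of_ne_zero hcoeff1)
  obtain ⟨z, hz⟩ := Complex.exists_root (Polynomial.natDegree_pos_iff_degree_pos.mp hdeg)
  have hz0 : z ≠ 0 := by
    intro h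
    rw [h] at hz
    rw [Polynomial.IsRoot, ← Polynomial.coeff_zero_eq_eval_zero] at hz
    exact hc0 hz
  refine ⟨Units.mk0 z hz0, ?_⟩
  rw [← hsum]
  have hev := polyOf_eval (coef := coef) hM (Units.mk0 z hz0)
  simp only [Units.val_mk0] at hev
  rw [Polynomial.IsRoot] at hz
  rw [hz] at hev
  have hzM : (z : ℂ) ^ M ≠ 0 := zpow_ne_zero _ hz0
  exact (mul_eq_zero.mp hev.symm).resolve_left hzM

end OneVar

section Torus

variable {n : ℕ}

lemma prod_zpow_sum {β : Type*} (σ : ℂˣ) (s : Finset β) (f : β → ℤ) :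
    ∏ i ∈ s, σ ^ f i = σ ^ (∑ i ∈ s, f i) := by
  induction s using Finset.cons_induction with
  | empty => simp
  | cons a s ha ih => rw [Finset.prod_cons, Finset.sum_cons, ih, _root_.zpow_add]

lemma torPow_add (ρ : Fin n → ℂˣ) (g g' : Fin n → ℤ) :
    torPow ρ (g + g') = torPow ρ g * torPow ρ g' := by
  rw [torPow, torPow, torPow, ← Finset.prod_mul_distrib]
  exact Finset.prod_congr rfl fun i _ => by rw [Pi.add_apply, _root_.zpow_add]

lemma torPow_zsmul (ρ : Fin n → ℂˣ) (k : ℤ) (h : Fin n → ℤ) :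
    torPow ρ (k • h) = (torPow ρ h) ^ k := by
  rw [torPow, torPow]
  rw [← Finset.prod_zpow]
  exact Finset.prod_congr rfl fun i _ => by
    rw [Pi.smul_apply, smul_eq_mul, mul_comm, _root_.zpow_mul]

lemma torPow_mul (ρ τ : Fin n → ℂˣ) (g : Fin n → ℤ) :
    torPow (ρ * τ) g = torPow ρ g * torPow τ g := by
  rw [torPow, torPow, torPow, ← Finset.prod_mul_distrib]
  exact Finset.prod_congr rfl fun i _ => by rw [Pi.mul_apply, mul_zpow]

/-- one-parameter subgroup in direction `ψ` -/
noncomputable def onePar (ψ : Fin n → ℤ) (σ : ℂˣ) : Fin n → ℂˣ := fun i => σ ^ ψ i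

lemma torPow_onePar (ψ : Fin n → ℤ) (σ : ℂˣ) (g : Fin n → ℤ) :
    torPow (onePar ψ σ) g = σ ^ (ψ ⬝ᵥ g) := by
  rw [torPow, dotProduct, ← prod_zpow_sum]
  exact Finset.prod_congr rfl fun i _ => by rw [onePar, ← _root_.zpow_mul]

lemma evalT_eq (Δ : LaurentRing n) (ρ : Fin n → ℂˣ) :
    evalT Δ ρ = ∑ g ∈ Δ.coeff.support, (Δ.coeff g : ℂ) * ((torPow ρ g : ℂˣ) : ℂ) := by
  rw [evalT, Finsupp.sum]
  refine Finset.sum_congr rfl fun g _ => ?_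
  congr 1
  rw [torPow]
  push_cast
  rfl

lemma torPow_surj {h : Fin n → ℤ} (hne : h ≠ 0) (s : ℂˣ) :
    ∃ ρ : Fin n → ℂˣ, torPow ρ h = s := by
  classical
  obtain ⟨i0, hi0⟩ := Function.ne_iff.mp hne
  have hi0' : (h i0 : ℂ) ≠ 0 := Int.cast_ne_zero.mpr hi0
  set w : ℂ := Complex.exp (Complex.log (s : ℂ) / (h i0 : ℂ)) with hw
  have hw0 : w ≠ 0 := Complex.exp_ne_zero _
  have hwpow : w ^ (h i0) = (s : ℂ) := by
    rw [hw, ← Complex.exp_int_mul, mul_div_cancel₀ _ hi0', Complex.exp_log s.ne_zero]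
  refine ⟨fun i => if i = i0 then Units.mk0 w hw0 else 1, ?_⟩
  rw [torPow, Finset.prod_eq_single i0]
  · rw [if_pos rfl]
    ext
    rw [Units.val_zpow_eq_zpow_val, Units.val_mk0]
    exact hwpow
  · intro i _ hi
    simp [hi]
  · intro hcon; exact absurd (Finset.mem_univ i0) hcon

lemma exists_generic (S : Finset (Fin n → ℤ)) (hS : ∀ d ∈ S, d ≠ 0) :
    ∃ w : Fin n → ℤ, ∀ d ∈ S, w ⬝ᵥ d ≠ 0 := by
  classical
  induction S using Finset.induction_on with
  | empty => exact ⟨0, by simp⟩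
  | @insert d S hd ih =>
    obtain ⟨w, hw⟩ := ih fun d' h' => hS _ (Finset.mem_insert_of_mem h')
    obtain ⟨i, hi⟩ := Function.ne_iff.mp (hS d (Finset.mem_insert_self d S))
    simp only [Pi.zero_apply] at hi
    set B : Finset ℤ := (insert d S).image (fun d' => -(w ⬝ᵥ d') / d' i) with hB
    obtain ⟨k, hk⟩ := Infinite.exists_notMem_finset B
    refine ⟨w + k • Pi.single i 1, ?_⟩
    intro d' hd'
    have hcompute : (w + k • Pi.single i 1) ⬝ᵥ d' = w ⬝ᵥ d' + k * d' i := by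
      rw [add_dotProduct, smul_dotProduct, single_dotProduct,
        one_mul, smul_eq_mul]
    rw [hcompute]
    by_cases hdi : d' i = 0
    · have hd'S : d' ∈ S := by
        rcases Finset.mem_insert.mp hd' with rfl | hmem
        · exact absurd hdi hi
        · exact hmem
      rw [hdi, mul_zero, add_zero]
      exact hw d' hd'S
    · intro hzero
      apply hk
      rw [hB]
      apply Finset.mem_image.mpr
      refine ⟨d', hd', ?_⟩
      have : k * d' i = -(w ⬝ᵥ d') := by linarith
      rw [← this, Int.mul_ediv_cancel _ hdi]

lemma exists_bezout {h : Fin n → ℤ} (hp : IsPrimitiveVec h) :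
    ∃ c : Fin n → ℤ, c ⬝ᵥ h = 1 := by
  classical
  set I : Ideal ℤ := Ideal.span (Set.range h) with hI
  have hItop : I = ⊤ := by
    apply Ideal.eq_top_of_isUnit_mem I (Submodule.IsPrincipal.generator_mem I)
    apply hp
    intro i
    rw [← Submodule.IsPrincipal.mem_iff_generator_dvd]
    exact Ideal.subset_span (Set.mem_range_self i)
  have h1 : (1 : ℤ) ∈ Submodule.span ℤ (Set.range h) := by
    have hmem : (1 : ℤ) ∈ I := by rw [hItop]; trivial
    exact hmem
  obtain ⟨c, hc⟩ := (Submodule.mem_span_range_iff_exists_fun ℤ).mp h1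
  exact ⟨c, by simpa [dotProduct, smul_eq_mul] using hc⟩

end Torus

lemma infinite_units_complex : Infinite ℂˣ := by
  apply Infinite.of_injective (fun n : ℕ => Units.mk0 ((n : ℂ) + 1) (Nat.cast_add_one_ne_zero n))
  intro a b hab
  have h := congrArg Units.val hab
  simp only [Units.val_mk0, add_left_inj] at h
  exact_mod_cast h

theorem newtonSegment_iff_union_parallel_subtori
    (n : ℕ) (hn : 2 ≤ n) (Δ : LaurentRing n)
    (hΔ : ¬ ∃ c : ℤ, Δ = AddMonoidAlgebra.single (0 : Fin n → ℤ) c) :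
    NewtonSegment Δ ↔
      ∃ h : Fin n → ℤ, h ≠ 0 ∧ IsPrimitiveVec h ∧
        ∃ Z : Finset ℂˣ, Z.Nonempty ∧
          V Δ = ⋃ z ∈ Z, {ρ : Fin n → ℂˣ | torPow ρ h = z} := by
  classical
  have hΔ0 : Δ ≠ 0 := by
    intro h
    exact hΔ ⟨0, by rw [h]; simp [AddMonoidAlgebra.single]⟩
  have hsupp : Δ.coeff.support.Nonempty := Finsupp.support_nonempty_iff.mpr (mt AddMonoidAlgebra.coeff_eq_zero.mp hΔ0)
  constructor
  · -- Forward direction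
    rintro ⟨⟨g, v, hv, hcol⟩, hcard⟩
    set d : ℤ := Finset.univ.gcd v with hd
    have hdvd : ∀ i, d ∣ v i := fun i => Finset.gcd_dvd (Finset.mem_univ i)
    have hd0 : d ≠ 0 := by
      intro h0
      apply hv
      funext i
      have := hdvd i
      rw [h0] at this
      simpa using this
    set h : Fin n → ℤ := fun i => v i / d with hh
    have hvdh : v = d • h := by
      funext i
      rw [hh, Pi.smul_apply, smul_eq_mul]
      exact (Int.mul_ediv_cancel' (hdvd i)).symm
    have hne : h ≠ 0 := by
      intro h0
      apply hv
      rw [hvdh, h0, smul_zero]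
    have hprim : IsPrimitiveVec h := by
      intro e he
      have hed : ∀ i ∈ Finset.univ, e * d ∣ v i := by
        intro i _
        have h1 : v i = d * h i := by rw [hvdh]; simp [smul_eq_mul]
        rw [h1, mul_comm e d]
        exact mul_dvd_mul_left d (he i)
      have : e * d ∣ d := Finset.dvd_gcd hed
      obtain ⟨u, hu⟩ := this
      have h2 : d * 1 = d * (e * u) := by rw [mul_one]; nth_rewrite 1 [hu]; ring
      have h1 : (1 : ℤ) = e * u := mul_left_cancel₀ hd0 h2
      exact IsUnit.of_mul_eq_one (a := e) u h1.symm
    have hrep : ∀ g' ∈ Δ.coeff.support, ∃ k : ℤ, g' = g + k • h := by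
      intro g' hg'
      obtain ⟨k, hk⟩ := hcol g' hg'
      exact ⟨k * d, by rw [hk, hvdh, smul_smul]⟩
    set expo : (Fin n → ℤ) → ℤ := fun g' =>
      if hg' : ∃ k : ℤ, g' = g + k • h then hg'.choose else 0 with hexpo
    have hspec : ∀ g' ∈ Δ.coeff.support, g' = g + (expo g') • h := by
      intro g' hg'
      have hex := hrep g' hg'
      rw [hexpo]
      simp only [dif_pos hex]
      exact hex.choose_spec
    have hinj : Set.InjOn expo Δ.coeff.support := by
      intro a ha b hb hab
      rw [hspec a ha, hspec b hb, hab]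
    have heval : ∀ ρ : Fin n → ℂˣ, evalT Δ ρ =
        (torPow ρ g : ℂ) * ∑ g' ∈ Δ.coeff.support, (Δ.coeff g' : ℂ) * ((torPow ρ h : ℂ)) ^ (expo g') := by
      intro ρ
      rw [evalT_eq, Finset.mul_sum]
      refine Finset.sum_congr rfl fun g' hg' => ?_
      have h1 : torPow ρ g' = torPow ρ g * (torPow ρ h) ^ (expo g') := by
        rw [congrArg (torPow ρ) (hspec g' hg'), torPow_add, torPow_zsmul]
      rw [h1, Units.val_mul, Units.val_zpow_eq_zpow_val]
      ring
    set A : Set ℂˣ := {σ : ℂˣ | ∑ g' ∈ Δ.coeff.support, (Δ.coeff g' : ℂ) * (σ : ℂ) ^ (expo g') = 0}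
      with hA
    obtain ⟨g0, hg0⟩ := hsupp
    have hcoef : ∀ g' ∈ Δ.coeff.support, (Δ.coeff g' : ℂ) ≠ 0 := by
      intro g' hg'
      exact_mod_cast Int.cast_ne_zero.mpr (Finsupp.mem_support_iff.mp hg')
    have hAfin : A.Finite := lzero_finite hinj ⟨g0, hg0, hcoef g0 hg0⟩
    have hAne : ∃ σ : ℂˣ, σ ∈ A := by
      apply lzero_exists hinj
      rwa [Finset.filter_true_of_mem hcoef]
    refine ⟨h, hne, hprim, hAfin.toFinset, ?_, ?_⟩
    · obtain ⟨σ0, hσ0⟩ := hAne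
      exact ⟨σ0, hAfin.mem_toFinset.mpr hσ0⟩
    · ext ρ
      have hVρ : ρ ∈ V Δ ↔ evalT Δ ρ = 0 := Iff.rfl
      rw [hVρ, heval ρ, mul_eq_zero]
      simp only [Set.mem_iUnion, Set.mem_setOf_eq, Set.Finite.mem_toFinset]
      constructor
      · rintro (hc | hc)
        · exact absurd hc (Units.ne_zero _)
        · exact ⟨torPow ρ h, hc, rfl⟩
      · rintro ⟨z, hz, hz'⟩
        right
        rw [hz']
        exact hz
  · -- Reverse direction
    rintro ⟨h, hne, hprim, Z, hZne, hV⟩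
    haveI : Infinite ℂˣ := infinite_units_complex
    obtain ⟨c, hc⟩ := exists_bezout hprim
    set κ : (Fin n → ℤ) → (Fin n → ℤ) := fun g => g - (c ⬝ᵥ g) • h with hκ
    have hreprκ : ∀ g, g = κ g + (c ⬝ᵥ g) • h := by
      intro g; rw [hκ]; simp
    have hcκ : ∀ g, c ⬝ᵥ κ g = 0 := by
      intro g
      rw [hκ]
      simp only [dotProduct_sub, dotProduct_smul, smul_eq_mul, hc, mul_one,
        sub_self]
    have hκinj : ∀ a b : Fin n → ℤ, κ a = κ b → c ⬝ᵥ a = c ⬝ᵥ b → a = b := by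
      intro a b h1 h2
      rw [hreprκ a, hreprκ b, h1, h2]
    set C : Finset (Fin n → ℤ) := Δ.coeff.support.image κ with hC
    set S : Finset (Fin n → ℤ) :=
      ((C ×ˢ C).filter (fun p => p.1 ≠ p.2)).image (fun p => p.1 - p.2) with hS
    have hSne : ∀ d ∈ S, d ≠ 0 := by
      intro d hd
      rw [hS] at hd
      obtain ⟨p, hp, hpd⟩ := Finset.mem_image.mp hd
      have := (Finset.mem_filter.mp hp).2
      rw [← hpd]
      exact sub_ne_zero.mpr this
    obtain ⟨w, hw⟩ := exists_generic S hSne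
    have hwC : ∀ u ∈ C, ∀ u' ∈ C, u ≠ u' → w ⬝ᵥ u ≠ w ⬝ᵥ u' := by
      intro u hu u' hu' huu' heq
      apply hw (u - u') ?_ 
      · rw [dotProduct_sub, heq, sub_self]
      · rw [hS]
        exact Finset.mem_image.mpr ⟨(u, u'),
          Finset.mem_filter.mpr ⟨Finset.mem_product.mpr ⟨hu, hu'⟩, huu'⟩, rfl⟩
    set ψ : Fin n → ℤ := w - (w ⬝ᵥ h) • c with hψ
    have hψh : ψ ⬝ᵥ h = 0 := by
      rw [hψ, sub_dotProduct, smul_dotProduct, smul_eq_mul, hc, mul_one,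
        sub_self]
    have hψg : ∀ g, ψ ⬝ᵥ g = w ⬝ᵥ κ g := by
      intro g
      rw [hψ, hκ, sub_dotProduct, smul_dotProduct, dotProduct_sub,
        dotProduct_smul]
      simp only [smul_eq_mul]
      ring
    set ε : (Fin n → ℤ) → ℤ := fun g => w ⬝ᵥ κ g with hε
    have hεκ : ∀ a ∈ Δ.coeff.support, ∀ b ∈ Δ.coeff.support, (ε a = ε b ↔ κ a = κ b) := by
      intro a ha b hb
      constructor
      · intro heq
        by_contra hne'
        exact hwC (κ a) (Finset.mem_image_of_mem κ ha) (κ b)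
          (Finset.mem_image_of_mem κ hb) hne' heq
      · intro heq
        show w ⬝ᵥ κ a = w ⬝ᵥ κ b
        rw [heq]
    set E : Finset ℤ := Δ.coeff.support.image ε with hE
    set lam : (Fin n → ℂˣ) → ℤ → ℂ := fun ρ0 e =>
      ∑ g ∈ Δ.coeff.support.filter (fun g => ε g = e), (Δ.coeff g : ℂ) * ((torPow ρ0 g : ℂˣ) : ℂ)
      with hlam
    have hexp : ∀ (ρ0 : Fin n → ℂˣ) (σ : ℂˣ),
        evalT Δ (ρ0 * onePar ψ σ) = ∑ e ∈ E, lam ρ0 e * (σ : ℂ) ^ e := by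
      intro ρ0 σ
      rw [evalT_eq]
      have hterm : ∀ g' ∈ Δ.coeff.support,
          (Δ.coeff g' : ℂ) * ((torPow (ρ0 * onePar ψ σ) g' : ℂˣ) : ℂ)
          = ((Δ.coeff g' : ℂ) * ((torPow ρ0 g' : ℂˣ) : ℂ)) * (σ : ℂ) ^ (ε g') := by
        intro g' hg'
        rw [torPow_mul, torPow_onePar, hψg g', Units.val_mul, Units.val_zpow_eq_zpow_val]
        ring
      rw [Finset.sum_congr rfl hterm]
      rw [← Finset.sum_fiberwise_of_maps_to (g := ε) (t := E)
        (fun g hg => Finset.mem_image_of_mem ε hg)]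
      refine Finset.sum_congr rfl fun e he => ?_
      simp only [hlam]
      rw [Finset.sum_mul]
      refine Finset.sum_congr rfl fun g hg => ?_
      rw [(Finset.mem_filter.mp hg).2]
    have hfiber : ∀ (ρ0 : Fin n → ℂˣ) (σ : ℂˣ), torPow (ρ0 * onePar ψ σ) h = torPow ρ0 h := by
      intro ρ0 σ
      rw [torPow_mul, torPow_onePar, hψh, zpow_zero, mul_one]
    have hmem : ∀ ρ : Fin n → ℂˣ, evalT Δ ρ = 0 ↔ torPow ρ h ∈ Z := by
      intro ρ
      have : ρ ∈ V Δ ↔ evalT Δ ρ = 0 := Iff.rfl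
      rw [← this, hV]
      simp only [Set.mem_iUnion, Set.mem_setOf_eq]
      constructor
      · rintro ⟨z, hz, hz'⟩; rw [hz']; exact hz
      · intro hz; exact ⟨torPow ρ h, hz, rfl⟩
    -- fQ
    set fQ : (Fin n → ℤ) → ℂˣ → ℂ := fun u z =>
      ∑ g ∈ Δ.coeff.support.filter (fun g => κ g = u), (Δ.coeff g : ℂ) * (z : ℂ) ^ (c ⬝ᵥ g) with hfQ
    have hlamfQ : ∀ (z : ℂˣ) (ρ0 : Fin n → ℂˣ), torPow ρ0 h = z →
        ∀ g0 ∈ Δ.coeff.support, lam ρ0 (ε g0) = ((torPow ρ0 (κ g0) : ℂˣ) : ℂ) * fQ (κ g0) z := by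
      intro z ρ0 hρ0 g0 hg0
      simp only [hlam, hfQ]
      have hfilter : Δ.coeff.support.filter (fun g => ε g = ε g0)
          = Δ.coeff.support.filter (fun g => κ g = κ g0) := by
        apply Finset.filter_congr
        intro g hg
        exact hεκ g hg g0 hg0
      rw [hfilter, Finset.mul_sum]
      refine Finset.sum_congr rfl fun g hg => ?_
      have hκg : κ g = κ g0 := (Finset.mem_filter.mp hg).2
      have h1 : torPow ρ0 g = torPow ρ0 (κ g0) * z ^ (c ⬝ᵥ g) := by
        rw [congrArg (torPow ρ0) (hreprκ g), torPow_add, torPow_zsmul, hκg, hρ0]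
      rw [h1, Units.val_mul, Units.val_zpow_eq_zpow_val]
      ring
    -- Claim A
    have hclaimA : ∀ z ∈ Z, ∀ g0 ∈ Δ.coeff.support, fQ (κ g0) z = 0 := by
      intro z hz g0 hg0
      obtain ⟨ρ0, hρ0⟩ := torPow_surj hne z
      have hzero : ∀ σ : ℂˣ, ∑ e ∈ E, lam ρ0 e * (σ : ℂ) ^ e = 0 := by
        intro σ
        rw [← hexp ρ0 σ]
        rw [hmem, hfiber, hρ0]
        exact hz
      have := lzero_coef (s := E) (coef := lam ρ0) (ex := fun e => e)
        (fun a _ b _ hab => hab) hzero (ε g0) (Finset.mem_image_of_mem ε hg0)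
      rw [hlamfQ z ρ0 hρ0 g0 hg0] at this
      rcases mul_eq_zero.mp this with hcon | hok
      · exact absurd hcon (Units.ne_zero _)
      · exact hok
    -- Claim B
    have hclaimB : ∀ s : ℂˣ, s ∉ Z → ∀ g0 ∈ Δ.coeff.support, ∀ g1 ∈ Δ.coeff.support, κ g0 ≠ κ g1 →
        fQ (κ g0) s = 0 ∨ fQ (κ g1) s = 0 := by
      intro s hs g0 hg0 g1 hg1 hκne
      by_contra hcon
      push_neg at hcon
      obtain ⟨h0, h1⟩ := hcon
      obtain ⟨ρ0, hρ0⟩ := torPow_surj hne s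
      have hl0 : lam ρ0 (ε g0) ≠ 0 := by
        rw [hlamfQ s ρ0 hρ0 g0 hg0]
        exact mul_ne_zero (Units.ne_zero _) h0
      have hl1 : lam ρ0 (ε g1) ≠ 0 := by
        rw [hlamfQ s ρ0 hρ0 g1 hg1]
        exact mul_ne_zero (Units.ne_zero _) h1
      have hεne : ε g0 ≠ ε g1 := fun heq => hκne ((hεκ g0 hg0 g1 hg1).mp heq)
      have hcard2 : 2 ≤ (E.filter (fun e => lam ρ0 e ≠ 0)).card := by
        apply Finset.one_lt_card.mpr
        exact ⟨ε g0, Finset.mem_filter.mpr ⟨Finset.mem_image_of_mem ε hg0, hl0⟩,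
          ε g1, Finset.mem_filter.mpr ⟨Finset.mem_image_of_mem ε hg1, hl1⟩, hεne⟩
      obtain ⟨σ, hσ⟩ := lzero_exists (s := E) (coef := lam ρ0) (ex := fun e => e)
        (fun a _ b _ hab => hab) hcard2
      rw [← hexp ρ0 σ, hmem, hfiber, hρ0] at hσ
      exact hs hσ
    -- single coset
    have honecoset : ∀ g0 ∈ Δ.coeff.support, ∀ g1 ∈ Δ.coeff.support, κ g0 = κ g1 := by
      intro g0 hg0 g1 hg1
      by_contra hκne
      have hprodzero : ∀ s : ℂˣ, fQ (κ g0) s = 0 ∨ fQ (κ g1) s = 0 := by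
        intro s
        by_cases hs : s ∈ Z
        · exact Or.inl (hclaimA s hs g0 hg0)
        · exact hclaimB s hs g0 hg0 g1 hg1 hκne
      have hcinj : ∀ g2 ∈ Δ.coeff.support, Set.InjOn (fun g => c ⬝ᵥ g)
          (Δ.coeff.support.filter (fun g => κ g = κ g2)) := by
        intro g2 _ a ha b hb hab
        have ha' := (Finset.mem_filter.mp ha).2
        have hb' := (Finset.mem_filter.mp hb).2
        exact hκinj a b (ha'.trans hb'.symm) hab
      have hfin0 : {s : ℂˣ | fQ (κ g0) s = 0}.Finite := by
        rw [hfQ]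
        apply lzero_finite (hcinj g0 hg0)
        exact ⟨g0, Finset.mem_filter.mpr ⟨hg0, rfl⟩,
          Int.cast_ne_zero.mpr (Finsupp.mem_support_iff.mp hg0)⟩
      have hfin1 : {s : ℂˣ | fQ (κ g1) s = 0}.Finite := by
        rw [hfQ]
        apply lzero_finite (hcinj g1 hg1)
        exact ⟨g1, Finset.mem_filter.mpr ⟨hg1, rfl⟩,
          Int.cast_ne_zero.mpr (Finsupp.mem_support_iff.mp hg1)⟩
      have huniv : (Set.univ : Set ℂˣ) ⊆
          {s : ℂˣ | fQ (κ g0) s = 0} ∪ {s : ℂˣ | fQ (κ g1) s = 0} := by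
        intro s _
        rcases hprodzero s with h' | h'
        · exact Or.inl h'
        · exact Or.inr h'
      exact Set.infinite_univ (Set.Finite.subset (hfin0.union hfin1) huniv)
    obtain ⟨g0, hg0⟩ := hsupp
    constructor
    · refine ⟨κ g0, h, hne, ?_⟩
      intro g' hg'
      refine ⟨c ⬝ᵥ g', ?_⟩
      have := hreprκ g'
      rw [honecoset g' hg' g0 hg0] at this
      exact this
    · by_contra hcard
      push_neg at hcard
      have hc1 : Δ.coeff.support.card = 1 := by
        have hpos := Finset.card_pos.mpr (⟨g0, hg0⟩ : Δ.coeff.support.Nonempty)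
        omega
      obtain ⟨ga, hga⟩ := Finset.card_eq_one.mp hc1
      obtain ⟨z, hz⟩ := hZne
      obtain ⟨ρ0, hρ0⟩ := torPow_surj hne z
      have hzero : evalT Δ ρ0 = 0 := (hmem ρ0).mpr (by rw [hρ0]; exact hz)
      rw [evalT_eq, hga, Finset.sum_singleton] at hzero
      have hga' : ga ∈ Δ.coeff.support := by rw [hga]; exact Finset.mem_singleton_self ga
      exact mul_ne_zero (Int.cast_ne_zero.mpr (Finsupp.mem_support_iff.mp hga'))
        (Units.ne_zero _) hzero
end

section
/- Let Δ be a nonzero Laurent polynomial in n variables over Z whose Newton polytope is a point or segment, and suppose V(Δ) ⊂ (C*)^n is a finite union of torsion-translated subtori. Then there exist a nonzero integer c, a product q(t) of cyclotomic polynomials, and an element h of the exponent lattice, such that Δ = c·q(t^h) up to units. -/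
open Pointwise

/-- An algebraic subtorus of `(ℂ*)^n`: the common kernel of the monomial
characters indexed by a saturated subgroup of `ℤ^n`. -/
def IsSubtorusSet {n : ℕ} (T : Set (Fin n → ℂˣ)) : Prop :=
  ∃ L : AddSubgroup (Fin n → ℤ),
    (∀ (h : Fin n → ℤ) (k : ℤ), k ≠ 0 → k • h ∈ L → h ∈ L) ∧
    T = {ρ | ∀ h ∈ L, torPow ρ h = 1}

/-- Substitution `t ↦ t^h` of a one-variable polynomial into `ℤ[ℤ^n]`. -/
noncomputable def substMonomial {n : ℕ} (q : Polynomial ℤ) (h : Fin n → ℤ) :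
    LaurentRing n :=
  q.sum fun i a => AddMonoidAlgebra.single (i • h) a

namespace Aux

variable {n : ℕ}

lemma pi_smul_eq_mul (a b : Fin n → ℂˣ) : a • b = a * b := by
  funext i; exact Units.ext rfl

lemma val_torPow (ρ : Fin n → ℂˣ) (h : Fin n → ℤ) :
    ((torPow ρ h : ℂˣ) : ℂ) = ∏ i, ((ρ i : ℂ) ^ (h i)) := by
  rw [torPow,
    show ((∏ i, ρ i ^ h i : ℂˣ) : ℂ) = ∏ i, ((ρ i ^ h i : ℂˣ) : ℂ) from
      map_prod (Units.coeHom ℂ) _ _]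
  simp [Units.val_zpow_eq_zpow_val]

lemma torPow_add (ρ : Fin n → ℂˣ) (a b : Fin n → ℤ) :
    torPow ρ (a + b) = torPow ρ a * torPow ρ b := by
  simp [torPow, zpow_add, Finset.prod_mul_distrib]

lemma torPow_zero (ρ : Fin n → ℂˣ) : torPow ρ (0 : Fin n → ℤ) = 1 := by
  simp [torPow]

lemma torPow_one (v : Fin n → ℤ) : torPow (1 : Fin n → ℂˣ) v = 1 := by
  simp [torPow]

lemma torPow_zsmul (ρ : Fin n → ℂˣ) (k : ℤ) (v : Fin n → ℤ) :
    torPow ρ (k • v) = torPow ρ v ^ k := by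
  simp only [torPow, ← Finset.prod_zpow]
  refine Finset.prod_congr rfl fun i _ => ?_
  rw [Pi.smul_apply, smul_eq_mul, mul_comm, zpow_mul]

lemma torPow_nsmul (ρ : Fin n → ℂˣ) (k : ℕ) (v : Fin n → ℤ) :
    torPow ρ (k • v) = torPow ρ v ^ k := by
  have : (k : ℤ) • v = k • v := by simp
  rw [← this, torPow_zsmul, zpow_natCast]

lemma torPow_mul (x y : Fin n → ℂˣ) (v : Fin n → ℤ) :
    torPow (x * y) v = torPow x v * torPow y v := by
  simp [torPow, mul_zpow, Finset.prod_mul_distrib]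

lemma torPow_pow (x : Fin n → ℂˣ) (k : ℕ) (v : Fin n → ℤ) :
    torPow (x ^ k) v = torPow x v ^ k := by
  simp only [torPow, ← Finset.prod_pow]
  refine Finset.prod_congr rfl fun i _ => ?_
  rw [Pi.pow_apply, ← zpow_natCast, ← zpow_mul, mul_comm, zpow_mul, zpow_natCast]

/-- the character as a monoid hom -/
noncomputable def charHom (ρ : Fin n → ℂˣ) : Multiplicative (Fin n → ℤ) →* ℂ where
  toFun h := ((torPow ρ (Multiplicative.toAdd h) : ℂˣ) : ℂ)
  map_one' := by simpa using congrArg Units.val (torPow_zero ρ)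
  map_mul' a b := by
    simpa using congrArg Units.val (torPow_add ρ (Multiplicative.toAdd a) (Multiplicative.toAdd b))

noncomputable def evalHom (ρ : Fin n → ℂˣ) : LaurentRing n →ₐ[ℤ] ℂ :=
  AddMonoidAlgebra.lift ℤ ℂ (Fin n → ℤ) (charHom ρ)

lemma evalT_eq (p : LaurentRing n) (ρ : Fin n → ℂˣ) : evalT p ρ = evalHom ρ p := by
  rw [evalHom, AddMonoidAlgebra.lift_apply, evalT]
  refine Finsupp.sum_congr fun h _ => ?_
  rw [charHom]
  simp [val_torPow, zsmul_eq_mul]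

lemma evalHom_single (ρ : Fin n → ℂˣ) (g : Fin n → ℤ) (a : ℤ) :
    evalHom ρ (AddMonoidAlgebra.single g a) = (a : ℂ) * ((torPow ρ g : ℂˣ) : ℂ) := by
  rw [evalHom, AddMonoidAlgebra.lift_single]
  simp [charHom, zsmul_eq_mul]

lemma evalHom_substMonomial (ρ : Fin n → ℂˣ) (q : Polynomial ℤ) (v : Fin n → ℤ) :
    evalHom ρ (substMonomial q v) = Polynomial.aeval ((torPow ρ v : ℂˣ) : ℂ) q := by
  rw [substMonomial, Polynomial.sum_def, map_sum, Polynomial.aeval_def,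
    Polynomial.eval₂_eq_sum, Polynomial.sum_def]
  refine Finset.sum_congr rfl fun i _ => ?_
  rw [evalHom_single, torPow_nsmul]
  push_cast [Units.val_pow_eq_pow_val]
  simp [mul_comm]

lemma substMonomial_add (p q : Polynomial ℤ) (v : Fin n → ℤ) :
    substMonomial (p + q) v = substMonomial p v + substMonomial q v := by
  unfold substMonomial
  rw [Polynomial.sum_add_index] <;> simp [Finsupp.single_add]

lemma substMonomial_monomial (k : ℕ) (a : ℤ) (v : Fin n → ℤ) :
    substMonomial (Polynomial.monomial k a) v = AddMonoidAlgebra.single (k • v) a := by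
  unfold substMonomial
  by_cases ha : a = 0
  · simp [ha]
  · rw [Polynomial.sum_monomial_index] ; simp

lemma substMonomial_smul (c : ℤ) (q : Polynomial ℤ) (v : Fin n → ℤ) :
    substMonomial (c • q) v = c • substMonomial q v := by
  unfold substMonomial
  rw [Polynomial.sum_smul_index _ _ _ (fun i => by simp)]
  rw [Polynomial.sum_def, Polynomial.sum_def, Finset.smul_sum]
  refine Finset.sum_congr rfl fun i _ => ?_
  rw [AddMonoidAlgebra.smul_single']

/-- substitution as an additive monoid hom -/
noncomputable def substAddHom (v : Fin n → ℤ) : Polynomial ℤ →+ LaurentRing n where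
  toFun q := substMonomial q v
  map_zero' := Polynomial.sum_zero_index _
  map_add' p q := substMonomial_add p q v

/-- existence of zpow-roots of units of ℂ -/
lemma exists_zpow_eq (u : ℂˣ) (k : ℤ) (hk : k ≠ 0) : ∃ z : ℂˣ, z ^ k = u := by
  have key : ∀ (w : ℂˣ) (m : ℤ), 0 < m → ∃ z : ℂˣ, z ^ m = w := by
    intro w m hm
    obtain ⟨z, hz⟩ := IsAlgClosed.exists_pow_nat_eq (w : ℂ) (n := m.toNat)
      (by omega)
    have hz0 : z ≠ 0 := by
      intro h
      rw [h, zero_pow (by omega)] at hz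
      exact (Units.ne_zero w) hz.symm
    refine ⟨Units.mk0 z hz0, Units.ext ?_⟩
    rw [show m = (m.toNat : ℤ) by omega, zpow_natCast]
    simpa using hz
  rcases lt_or_gt_of_ne hk with hneg | hpos
  · obtain ⟨z, hz⟩ := key u (-k) (by omega)
    exact ⟨z⁻¹, by rw [inv_zpow, ← zpow_neg, hz]⟩
  · exact key u k hpos

/-- a nonzero polynomial over ℂ cannot vanish at `α * r^e` for all naturals r ≥ 2 -/
lemma not_forall_root (p : Polynomial ℂ) (hp : p ≠ 0) (α : ℂ) (hα : α ≠ 0)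
    (e : ℝ) (he : e ≠ 0)
    (h : ∀ k : ℕ, p.IsRoot (α * ((((k : ℝ) + 2) ^ e : ℝ) : ℂ))) : False := by
  have hfin := Polynomial.finite_setOf_isRoot hp
  have hinj : Function.Injective (fun k : ℕ => α * ((((k : ℝ) + 2) ^ e : ℝ) : ℂ)) := by
    intro a b hab
    simp only [mul_right_inj' hα] at hab
    have hab' : (((a : ℝ) + 2) ^ e : ℝ) = (((b : ℝ) + 2) ^ e : ℝ) :=
      Complex.ofReal_injective hab
    have ha2 : (0:ℝ) < (a : ℝ) + 2 := by positivity
    have hb2 : (0:ℝ) < (b : ℝ) + 2 := by positivity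
    have hlog := congrArg Real.log hab'
    rw [Real.log_rpow ha2, Real.log_rpow hb2] at hlog
    have : Real.log ((a:ℝ)+2) = Real.log ((b:ℝ)+2) := mul_left_cancel₀ he hlog
    have : ((a:ℝ)+2) = ((b:ℝ)+2) := by
      rw [← Real.exp_log ha2, ← Real.exp_log hb2, this]
    exact_mod_cast add_right_cancel this
  exact (Set.infinite_of_injective_forall_mem hinj
    (fun k => by simpa [Set.mem_setOf_eq, Polynomial.IsRoot] using h k)) hfin

open Polynomial in
lemma cyclo_factor_aux : ∀ (N : ℕ) (P : Polynomial ℤ), P.natDegree ≤ N → P ≠ 0 →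
    (∀ α : ℂ, (Polynomial.aeval α) P = 0 → ∃ k : ℕ, 0 < k ∧ α ^ k = 1) →
    ∃ (c : ℤ) (m : ℕ) (ks : Fin m → ℕ), c ≠ 0 ∧ (∀ i, 0 < ks i) ∧
      P = c • ∏ i, Polynomial.cyclotomic (ks i) ℤ := by
  intro N
  induction N with
  | zero =>
    intro P hdeg hP _
    obtain ⟨a, rfl⟩ := Polynomial.natDegree_eq_zero.mp (Nat.le_zero.mp hdeg)
    refine ⟨a, 0, Fin.elim0, fun h => hP (by rw [h, map_zero]), fun i => i.elim0, ?_⟩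
    simp [zsmul_eq_mul, Polynomial.C_eq_intCast]
  | succ N ih =>
    intro P hdeg hP hroots
    by_cases h0 : P.natDegree = 0
    · obtain ⟨a, rfl⟩ := Polynomial.natDegree_eq_zero.mp h0
      refine ⟨a, 0, Fin.elim0, fun h => hP (by rw [h, map_zero]), fun i => i.elim0, ?_⟩
      simp [zsmul_eq_mul, Polynomial.C_eq_intCast]
    · set Pc := P.map (algebraMap ℤ ℂ) with hPc
      have hPc0 : Pc ≠ 0 :=
        (Polynomial.map_ne_zero_iff (algebraMap ℤ ℂ).injective_int).mpr hP
      have hdegc : Pc.natDegree = P.natDegree := by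
        rw [hPc, Polynomial.natDegree_map_eq_of_injective (algebraMap ℤ ℂ).injective_int]
      have : Pc.degree ≠ 0 := by
        rw [Polynomial.degree_eq_natDegree hPc0, hdegc]
        exact_mod_cast fun h => h0 (by exact_mod_cast h)
      obtain ⟨α, hαr⟩ := IsAlgClosed.exists_root Pc this
      have hαroot : (Polynomial.aeval α) P = 0 := by
        rwa [Polynomial.aeval_def, ← Polynomial.eval_map]
      obtain ⟨k, hk, hαk⟩ := hroots α hαroot
      have hαfin : IsOfFinOrder α := isOfFinOrder_iff_pow_eq_one.mpr ⟨k, hk, hαk⟩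
      have hord : 0 < orderOf α := hαfin.orderOf_pos
      have hprim : IsPrimitiveRoot α (orderOf α) :=
        ⟨pow_orderOf_eq_one α, fun l hl => orderOf_dvd_of_pow_eq_one hl⟩
      have hα0 : α ≠ 0 := by
        intro h
        rw [h, zero_pow hk.ne'] at hαk
        exact zero_ne_one hαk
      have hint : IsIntegral ℤ α := by
        refine ⟨X ^ k - C 1, Polynomial.monic_X_pow_sub_C 1 hk.ne', ?_⟩
        simp [hαk]
      have hdvd : cyclotomic (orderOf α) ℤ ∣ P := by
        rw [cyclotomic_eq_minpoly hprim hord]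
        exact minpoly.isIntegrallyClosed_dvd hint hαroot
      obtain ⟨Q, hPQ⟩ := hdvd
      have hQ0 : Q ≠ 0 := fun h => hP (by rw [hPQ, h, mul_zero])
      have hcyc0 : cyclotomic (orderOf α) ℤ ≠ 0 := cyclotomic_ne_zero _ ℤ
      have hdeg' : P.natDegree = (orderOf α).totient + Q.natDegree := by
        rw [hPQ, Polynomial.natDegree_mul hcyc0 hQ0, Polynomial.natDegree_cyclotomic]
      have htot : 0 < (orderOf α).totient := Nat.totient_pos.mpr hord
      have hQdeg : Q.natDegree ≤ N := by omega
      have hQroots : ∀ β : ℂ, (Polynomial.aeval β) Q = 0 → ∃ k : ℕ, 0 < k ∧ β ^ k = 1 := by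
        intro β hβ
        exact hroots β (by rw [hPQ, map_mul, hβ, mul_zero])
      obtain ⟨c, m, ks, hc, hks, hQfac⟩ := ih Q hQdeg hQ0 hQroots
      refine ⟨c, m + 1, Fin.cons (orderOf α) ks, hc, ?_, ?_⟩
      · intro i
        refine Fin.cases ?_ ?_ i
        · simpa using hord
        · intro j; simpa using hks j
      · rw [hPQ, hQfac, mul_smul_comm, Fin.prod_univ_succ]
        simp

lemma cyclo_factor (P : Polynomial ℤ) (hP : P ≠ 0)
    (hroots : ∀ α : ℂ, (Polynomial.aeval α) P = 0 → ∃ k : ℕ, 0 < k ∧ α ^ k = 1) :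
    ∃ (c : ℤ) (m : ℕ) (ks : Fin m → ℕ), c ≠ 0 ∧ (∀ i, 0 < ks i) ∧
      P = c • ∏ i, Polynomial.cyclotomic (ks i) ℤ :=
  cyclo_factor_aux P.natDegree P le_rfl hP hroots

def castQ (h : Fin n → ℤ) : Fin n → ℚ := fun i => (h i : ℚ)

lemma castQ_injective : Function.Injective (castQ (n := n)) := by
  intro a b hab
  funext i
  exact Int.cast_injective (congrFun hab i)

lemma exists_functional (L : AddSubgroup (Fin n → ℤ))
    (sat : ∀ (h : Fin n → ℤ) (k : ℤ), k ≠ 0 → k • h ∈ L → h ∈ L)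
    (v : Fin n → ℤ) (hv : v ∉ L) :
    ∃ d : Fin n → ℚ, (∑ i, (v i : ℚ) * d i) ≠ 0 ∧
      ∀ h ∈ L, ∑ i, (h i : ℚ) * d i = 0 := by
  set W : Submodule ℚ (Fin n → ℚ) := Submodule.span ℚ (castQ '' (L : Set (Fin n → ℤ))) with hW
  have hvW : castQ v ∉ W := by
    intro hmem
    rw [hW, Finsupp.mem_span_image_iff_linearCombination] at hmem
    obtain ⟨l, hl, hsum⟩ := hmem
    rw [Finsupp.linearCombination_apply] at hsum
    set D : ℤ := ∏ w ∈ l.support, ((l w).den : ℤ) with hD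
    have hD0 : D ≠ 0 := by
      rw [hD]
      exact Finset.prod_ne_zero_iff.mpr fun w _ => by exact_mod_cast (l w).den_nz
    set zfun : (Fin n → ℤ) → ℤ := fun w => (l w).num * (D / ((l w).den : ℤ)) with hzfun
    have hz : ∀ w ∈ l.support, (zfun w : ℚ) = (D : ℚ) * l w := by
      intro w hw
      obtain ⟨k, hk⟩ : ((l w).den : ℤ) ∣ D := Finset.dvd_prod_of_mem _ hw
      have hden0 : ((l w).den : ℤ) ≠ 0 := by exact_mod_cast (l w).den_nz
      have hdiv : D / ((l w).den : ℤ) = k := by rw [hk, Int.mul_ediv_cancel_left _ hden0]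
      rw [hzfun]
      simp only [hdiv]
      push_cast [hk]
      rw [mul_comm ((l w).den : ℚ) (k : ℚ), mul_assoc, mul_comm ((l w).den : ℚ) (l w),
        Rat.mul_den_eq_num]
      ring
    set s : Fin n → ℤ := ∑ w ∈ l.support, zfun w • w with hs
    have hsL : s ∈ L := by
      refine AddSubgroup.sum_mem L fun w hw => AddSubgroup.zsmul_mem L ?_ _
      exact (Finsupp.mem_supported ℚ l).mp hl hw
    have hcast : castQ (D • v) = castQ s := by
      funext i
      have hcoord : ∑ w ∈ l.support, l w * (w i : ℚ) = (v i : ℚ) := by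
        have := congrFun hsum i
        rw [Finsupp.sum, Finset.sum_apply] at this
        simpa [castQ] using this
      have h1 : castQ (D • v) i = (D : ℚ) * (v i : ℚ) := by
        simp [castQ]
      have h2 : castQ s i = ∑ w ∈ l.support, (zfun w : ℚ) * (w i : ℚ) := by
        simp only [castQ, hs, Finset.sum_apply, Pi.smul_apply, smul_eq_mul]
        push_cast
        rfl
      rw [h1, h2, ← hcoord, Finset.mul_sum]
      refine Finset.sum_congr rfl fun w hw => ?_
      rw [hz w hw]
      ring
    have : D • v = s := castQ_injective hcast
    exact hv (sat v D hD0 (this ▸ hsL))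
  obtain ⟨f, hfv, hfW⟩ := W.exists_dual_map_eq_bot_of_notMem hvW inferInstance
  set d : Fin n → ℚ := fun i => f (fun j => if i = j then 1 else 0) with hd
  have hfapply : ∀ x : Fin n → ℚ, f x = ∑ i, x i * d i := by
    intro x
    rw [LinearMap.pi_apply_eq_sum_univ f x]
    simp [hd, smul_eq_mul]
  refine ⟨d, ?_, ?_⟩
  · intro hcontra
    refine hfv ?_
    rw [hfapply (castQ v)]
    simpa [castQ] using hcontra
  · intro h hh
    have : castQ h ∈ W := Submodule.subset_span ⟨h, hh, rfl⟩
    have : f (castQ h) ∈ W.map f := Submodule.mem_map_of_mem this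
    rw [hfW, Submodule.mem_bot] at this
    have h2 := hfapply (castQ h)
    rw [this] at h2
    simpa [castQ] using h2.symm

end Aux

theorem thin_poly_with_torsion_translated_zero_locus
    (n : ℕ) (Δ : LaurentRing n) (hΔ : Δ ≠ 0)
    -- the Newton polytope of `Δ` is a point or a line segment
    (hthin : ∃ g v : Fin n → ℤ, ∀ g' ∈ Δ.coeff.support, ∃ m : ℤ, g' = g + m • v)
    -- `V(Δ)` is a finite union of torsion-translated subtori
    (hV : ∃ (m : ℕ) (T : Fin m → Set (Fin n → ℂˣ)) (ρ : Fin m → (Fin n → ℂˣ)),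
      (∀ i, IsSubtorusSet (T i)) ∧ (∀ i, IsOfFinOrder (ρ i)) ∧
      {x : Fin n → ℂˣ | evalT Δ x = 0} = ⋃ i, (ρ i) • (T i)) :
    ∃ (c : ℤ) (q : Polynomial ℤ) (h : Fin n → ℤ),
      c ≠ 0 ∧
      (∃ (m : ℕ) (ks : Fin m → ℕ), (∀ i, 0 < ks i) ∧
        q = ∏ i, Polynomial.cyclotomic (ks i) ℤ) ∧
      ∃ (g : Fin n → ℤ) (ε : ℤ), (ε = 1 ∨ ε = -1) ∧
        Δ = AddMonoidAlgebra.single g ε * (c • substMonomial q h) := by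
  classical
  obtain ⟨g, v, hgv⟩ := hthin
  by_cases hv : v = 0
  · subst hv
    have hsub : Δ.coeff.support ⊆ {g} := by
      intro g' hg'
      obtain ⟨m, hm⟩ := hgv g' hg'
      simp [hm]
    have hΔeq : Δ = AddMonoidAlgebra.single g (Δ.coeff g) :=
      AddMonoidAlgebra.coeff_injective (Finsupp.support_subset_singleton.mp hsub)
    have hc : Δ.coeff g ≠ 0 := by
      intro h
      exact hΔ (by rw [hΔeq, h]; simp)
    refine ⟨Δ.coeff g, 1, 0, hc, ⟨0, Fin.elim0, fun i => i.elim0, by simp⟩, g, 1, Or.inl rfl, ?_⟩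
    have hsubst : substMonomial (1 : Polynomial ℤ) (0 : Fin n → ℤ) =
        AddMonoidAlgebra.single (0 : Fin n → ℤ) 1 := by
      rw [show (1 : Polynomial ℤ) = Polynomial.monomial 0 1 by simp,
        Aux.substMonomial_monomial]
      simp
    rw [hsubst, AddMonoidAlgebra.smul_single', mul_one, AddMonoidAlgebra.single_mul_single,
      add_zero, one_mul]
    exact hΔeq
  · obtain ⟨j, hj0⟩ := Function.ne_iff.mp hv
    have hj : v j ≠ 0 := by simpa using hj0
    set mfun : (Fin n → ℤ) → ℤ := fun g' => (g' j - g j) / (v j) with hmfun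
    have hmspec : ∀ g' ∈ Δ.coeff.support, g' = g + mfun g' • v := by
      intro g' hg'
      obtain ⟨m, hm⟩ := hgv g' hg'
      have hmeq : mfun g' = m := by
        rw [hmfun]
        simp only [hm, Pi.add_apply, Pi.smul_apply, smul_eq_mul, add_sub_cancel_left]
        exact Int.mul_ediv_cancel _ hj
      rw [hmeq]
      exact hm
    have hsuppne : Δ.coeff.support.Nonempty := Finsupp.support_nonempty_iff.mpr (by simpa using hΔ)
    set img := Δ.coeff.support.image mfun with himg
    have himgne : img.Nonempty := hsuppne.image _
    set m₀ := img.min' himgne with hm₀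
    set g₀ := g + m₀ • v with hg₀
    set efun : (Fin n → ℤ) → ℕ := fun g' => (mfun g' - m₀).toNat with hefun
    have hele : ∀ g' ∈ Δ.coeff.support, (efun g' : ℤ) = mfun g' - m₀ := by
      intro g' hg'
      have : m₀ ≤ mfun g' := Finset.min'_le _ _ (Finset.mem_image_of_mem _ hg')
      simp only [hefun]
      omega
    have hginv : ∀ g' ∈ Δ.coeff.support, g' = g₀ + (efun g' : ℤ) • v := by
      intro g' hg'
      rw [hele g' hg', hg₀, sub_smul]
      conv_lhs => rw [hmspec g' hg']
      abel
    have hinj : ∀ a ∈ Δ.coeff.support, ∀ b ∈ Δ.coeff.support, efun a = efun b → a = b := by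
      intro a ha b hb hab
      rw [hginv a ha, hginv b hb, hab]
    set P : Polynomial ℤ := ∑ g' ∈ Δ.coeff.support, Polynomial.monomial (efun g') (Δ.coeff g') with hP
    have hfact : Δ = AddMonoidAlgebra.single g₀ 1 * substMonomial P v := by
      have hsum : substMonomial P v =
          ∑ g' ∈ Δ.coeff.support, AddMonoidAlgebra.single ((efun g') • v) (Δ.coeff g') := by
        have : substMonomial P v = Aux.substAddHom v P := rfl
        rw [this, hP, map_sum]
        exact Finset.sum_congr rfl fun g' _ => Aux.substMonomial_monomial _ _ _
      rw [hsum, Finset.mul_sum]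
      conv_lhs => rw [← AddMonoidAlgebra.sum_coeff_single Δ, Finsupp.sum]
      refine Finset.sum_congr rfl fun g' hg' => ?_
      rw [AddMonoidAlgebra.single_mul_single, one_mul]
      congr 1
      rw [← natCast_zsmul]
      exact hginv g' hg'
    have hcoeff : ∀ a ∈ Δ.coeff.support, P.coeff (efun a) = Δ.coeff a := by
      intro a ha
      rw [hP, Polynomial.finset_sum_coeff]
      rw [Finset.sum_eq_single a]
      · simp [Polynomial.coeff_monomial]
      · intro b hb hba
        rw [Polynomial.coeff_monomial]
        rw [if_neg (fun h => hba (hinj b hb a ha h))]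
      · intro h
        exact absurd ha h
    obtain ⟨a₀, ha₀, hma₀⟩ := Finset.mem_image.mp (Finset.min'_mem img himgne)
    have hea₀ : efun a₀ = 0 := by
      simp only [hefun, hma₀]
      omega
    have hc0 : P.coeff 0 ≠ 0 := by
      rw [← hea₀, hcoeff a₀ ha₀]
      exact Finsupp.mem_support_iff.mp ha₀
    have hPne : P ≠ 0 := fun h => hc0 (by rw [h]; simp)
    have heval : ∀ x : Fin n → ℂˣ, evalT Δ x =
        ((torPow x g₀ : ℂˣ) : ℂ) * Polynomial.aeval ((torPow x v : ℂˣ) : ℂ) P := by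
      intro x
      rw [Aux.evalT_eq, hfact, map_mul, Aux.evalHom_single, Aux.evalHom_substMonomial]
      push_cast
      ring
    obtain ⟨mT, T, ρ, hsubT, htor, hzero⟩ := hV
    have hroots : ∀ α : ℂ, Polynomial.aeval α P = 0 → ∃ k : ℕ, 0 < k ∧ α ^ k = 1 := by
      intro α hα
      have hα0 : α ≠ 0 := by
        intro h
        rw [h, Polynomial.aeval_def, Polynomial.eval₂_at_zero] at hα
        refine hc0 ?_
        simpa [algebraMap_int_eq] using hα
      set u : ℂˣ := Units.mk0 α hα0 with hu
      obtain ⟨z, hz⟩ := Aux.exists_zpow_eq u (v j) hj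
      set x : Fin n → ℂˣ := fun i => if i = j then z else 1 with hx
      have hxv : torPow x v = u := by
        rw [torPow, Finset.prod_eq_single j]
        · simp only [hx, if_pos rfl]
          exact hz
        · intro b _ hbj
          simp only [hx, if_neg hbj, one_zpow]
        · simp
      have hxzero : evalT Δ x = 0 := by
        rw [heval, hxv]
        have : ((u : ℂˣ) : ℂ) = α := rfl
        rw [this, hα, mul_zero]
      have hxmem : x ∈ ⋃ i, ρ i • T i := by
        rw [← hzero]
        exact hxzero
      obtain ⟨i, hi⟩ := Set.mem_iUnion.mp hxmem
      obtain ⟨τ, hτT, hτx⟩ := Set.mem_smul_set.mp hi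
      rw [Aux.pi_smul_eq_mul] at hτx
      obtain ⟨L, sat, hTL⟩ := hsubT i
      have hτmem : ∀ w ∈ L, torPow τ w = 1 := by
        rw [hTL] at hτT
        exact hτT
      by_cases hvL : v ∈ L
      · refine ⟨orderOf (ρ i), (htor i).orderOf_pos, ?_⟩
        have h1 : torPow x v = torPow (ρ i) v * torPow τ v := by
          rw [← hτx]
          exact Aux.torPow_mul _ _ _
        rw [hτmem v hvL, mul_one] at h1
        have h2 : (torPow (ρ i) v) ^ orderOf (ρ i) = 1 := by
          rw [← Aux.torPow_pow, pow_orderOf_eq_one, Aux.torPow_one]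
        have hαu : α = ((torPow (ρ i) v : ℂˣ) : ℂ) := by
          rw [← h1, hxv]
          rfl
        rw [hαu, ← Units.val_pow_eq_pow_val, h2, Units.val_one]
      · exfalso
        obtain ⟨d, hdv, hdL⟩ := Aux.exists_functional L sat v hvL
        set c₀ : ℚ := ∑ i, (v i : ℚ) * d i with hc₀def
        have key : ∀ r : ℝ, 0 < r →
            Polynomial.aeval (α * (((r ^ ((c₀ : ℚ) : ℝ) : ℝ)) : ℂ)) P = 0 := by
          intro r hr
          set τr : Fin n → ℂˣ := fun i =>
            Units.mk0 (((r ^ ((d i : ℚ) : ℝ) : ℝ)) : ℂ)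
              (by exact_mod_cast (Real.rpow_pos_of_pos hr _).ne') with hτr
          have hτrval : ∀ w : Fin n → ℤ, ((torPow τr w : ℂˣ) : ℂ) =
              (((r ^ ((∑ i, (w i : ℚ) * d i : ℚ) : ℝ) : ℝ)) : ℂ) := by
            intro w
            rw [Aux.val_torPow]
            have hterm : ∀ i, ((τr i : ℂ)) ^ (w i) =
                (((r ^ (((w i : ℚ) * d i : ℚ) : ℝ) : ℝ)) : ℂ) := by
              intro i
              simp only [hτr, Units.val_mk0]
              rw [← Complex.ofReal_zpow]
              congr 1
              rw [← Real.rpow_intCast (r ^ ((d i : ℚ) : ℝ)) (w i), ← Real.rpow_mul hr.le]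
              congr 1
              push_cast
              ring
            rw [Finset.prod_congr rfl (fun i _ => hterm i), ← Complex.ofReal_prod]
            congr 1
            rw [show ((∑ i, (w i : ℚ) * d i : ℚ) : ℝ) = ∑ i, (((w i : ℚ) * d i : ℚ) : ℝ) by
              push_cast; ring, ← Real.rpow_sum_of_pos]
            exact hr
          have hτrT : ∀ w ∈ L, torPow τr w = 1 := by
            intro w hw
            refine Units.ext ?_
            rw [hτrval w, hdL w hw]
            simp
          have hmemzero : (x * τr) ∈ {y : Fin n → ℂˣ | evalT Δ y = 0} := by
            rw [hzero]
            refine Set.mem_iUnion.mpr ⟨i, ?_⟩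
            refine Set.mem_smul_set.mpr ⟨τ * τr, ?_, ?_⟩
            · rw [hTL]
              intro w hw
              rw [Aux.torPow_mul, hτmem w hw, one_mul]
              exact hτrT w hw
            · rw [Aux.pi_smul_eq_mul, ← mul_assoc, hτx]
          have hev : evalT Δ (x * τr) = 0 := hmemzero
          rw [heval] at hev
          have hev2 := (mul_eq_zero.mp hev).resolve_left (Units.ne_zero _)
          rw [Aux.torPow_mul, hxv] at hev2
          have hval : ((u * torPow τr v : ℂˣ) : ℂ) =
              α * (((r ^ ((c₀ : ℚ) : ℝ) : ℝ)) : ℂ) := by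
            rw [Units.val_mul, hτrval v]
            rfl
          rwa [hval] at hev2
        have hc₀ne : ((c₀ : ℚ) : ℝ) ≠ 0 := by
          exact_mod_cast hdv
        refine Aux.not_forall_root (P.map (algebraMap ℤ ℂ))
          ((Polynomial.map_ne_zero_iff (algebraMap ℤ ℂ).injective_int).mpr hPne)
          α hα0 ((c₀ : ℚ) : ℝ) hc₀ne ?_
        intro k
        have := key ((k : ℝ) + 2) (by positivity)
        rwa [Polynomial.IsRoot, Polynomial.eval_map, ← Polynomial.aeval_def]
    obtain ⟨c, m, ks, hc, hks, hPfac⟩ := Aux.cyclo_factor P hPne hroots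
    refine ⟨c, ∏ i, Polynomial.cyclotomic (ks i) ℤ, v, hc, ⟨m, ks, hks, rfl⟩,
      g₀, 1, Or.inl rfl, ?_⟩
    rw [hfact, hPfac, Aux.substMonomial_smul]
end

section
/- Let N be a compact orientable 3-manifold with empty or toroidal boundary, b_1(N) ≥ 2, whose Thurston norm ball has at least two non-equivalent fibered faces. Then the thickness of the Alexander polynomial of N is at least 2. -/
/-- The pairing between `H¹(N;ℚ) = ℚ^n` and the exponent lattice `ℤ^n`. -/
def pairQ {n : ℕ} (φ : Fin n → ℚ) (g : Fin n → ℤ) : ℚ := ∑ i, φ i * (g i : ℚ)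

/-- The Alexander norm of `φ` w.r.t. the Alexander polynomial `Δ`:
`max {φ(g) - φ(h) : g, h exponents of Δ}` (and `0` if `Δ = 0`). -/
noncomputable def alexNorm {n : ℕ} (Δ : LaurentRing n) (φ : Fin n → ℚ) : ℚ :=
  WithBot.unbotD 0 ((Δ.coeff.support ×ˢ Δ.coeff.support).image fun p => pairQ φ p.1 - pairQ φ p.2).max

/-- The dimension of the Newton polytope of `Δ`. -/
noncomputable def newtonDim {n : ℕ} (Δ : LaurentRing n) : ℕ :=
  Module.finrank ℚ (Submodule.span ℚ
    {x : Fin n → ℚ | ∃ g ∈ Δ.coeff.support, ∃ h ∈ Δ.coeff.support,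
      x = (fun i => (g i : ℚ)) - (fun i => (h i : ℚ))})

lemma pairQ_add_smul {n : ℕ} (φ ξ : Fin n → ℚ) (t : ℚ) (g : Fin n → ℤ) :
    pairQ (φ + t • ξ) g = pairQ φ g + t * pairQ ξ g := by
  unfold pairQ
  simp only [Pi.add_apply, Pi.smul_apply, smul_eq_mul, add_mul, Finset.sum_add_distrib,
    Finset.mul_sum, mul_assoc]

lemma vertex_mem_span {n : ℕ} (Δ : LaurentRing n) (v : Fin n → ℚ)
    (U : Set (Fin n → ℚ)) (hU : IsOpen U) (hUne : U.Nonempty)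
    (hv : ∀ φ ∈ U, alexNorm Δ φ = ∑ i, φ i * v i) :
    v ∈ Submodule.span ℚ {x : Fin n → ℚ | ∃ g ∈ Δ.coeff.support, ∃ h ∈ Δ.coeff.support,
      x = (fun i => (g i : ℚ)) - (fun i => (h i : ℚ))} := by
  set D : Set (Fin n → ℚ) := {x : Fin n → ℚ | ∃ g ∈ Δ.coeff.support, ∃ h ∈ Δ.coeff.support,
      x = (fun i => (g i : ℚ)) - (fun i => (h i : ℚ))} with hD
  set W := Submodule.span ℚ D with hW
  by_contra hmem
  -- find a dual functional vanishing on W and nonzero on v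
  have hπ : W.mkQ v ≠ 0 := by
    simpa [Submodule.Quotient.mk_eq_zero] using hmem
  obtain ⟨g0, hg0⟩ : ∃ g0 : Module.Dual ℚ ((Fin n → ℚ) ⧸ W), g0 (W.mkQ v) ≠ 0 := by
    by_contra h
    push_neg at h
    exact hπ ((Module.forall_dual_apply_eq_zero_iff ℚ _).mp h)
  set f : (Fin n → ℚ) →ₗ[ℚ] ℚ := g0.comp W.mkQ with hf
  have hfW : ∀ w ∈ W, f w = 0 := by
    intro w hw
    simp [hf, (Submodule.Quotient.mk_eq_zero W).mpr hw]
  set ξ : Fin n → ℚ := fun i => f (fun j => if i = j then 1 else 0) with hξ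
  have hfx : ∀ x : Fin n → ℚ, f x = ∑ i, x i * ξ i := by
    intro x; simpa [smul_eq_mul] using f.pi_apply_eq_sum_univ x
  -- f vanishes on differences of exponents, hence alexNorm is ξ-invariant
  have hkey : ∀ g ∈ Δ.coeff.support, ∀ h ∈ Δ.coeff.support, pairQ ξ g - pairQ ξ h = 0 := by
    intro g hg h hh
    have hd : ((fun i => (g i : ℚ)) - fun i => (h i : ℚ)) ∈ W :=
      Submodule.subset_span ⟨g, hg, h, hh, rfl⟩
    have := hfW _ hd
    rw [map_sub, hfx, hfx] at this
    have e1 : pairQ ξ g = ∑ i, (g i : ℚ) * ξ i := by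
      unfold pairQ; exact Finset.sum_congr rfl fun i _ => mul_comm _ _
    have e2 : pairQ ξ h = ∑ i, (h i : ℚ) * ξ i := by
      unfold pairQ; exact Finset.sum_congr rfl fun i _ => mul_comm _ _
    rw [e1, e2]; linarith [this]
  have hinv : ∀ t : ℚ, ∀ φ : Fin n → ℚ, alexNorm Δ (φ + t • ξ) = alexNorm Δ φ := by
    intro t φ
    unfold alexNorm
    have himg : ((Δ.coeff.support ×ˢ Δ.coeff.support).image
        fun p => pairQ (φ + t • ξ) p.1 - pairQ (φ + t • ξ) p.2) =
        ((Δ.coeff.support ×ˢ Δ.coeff.support).image fun p => pairQ φ p.1 - pairQ φ p.2) := by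
      apply Finset.image_congr
      intro p hp
      rw [Finset.mem_coe, Finset.mem_product] at hp
      have h0 := hkey p.1 hp.1 p.2 hp.2
      dsimp only
      rw [pairQ_add_smul, pairQ_add_smul]
      have h1 : pairQ ξ p.1 = pairQ ξ p.2 := by linarith
      rw [h1]; ring
    rw [himg]
  -- find a nonzero t with φ₀ + t • ξ ∈ U
  obtain ⟨φ₀, hφ₀⟩ := hUne
  have hcont : Continuous (fun t : ℚ => φ₀ + t • ξ) :=
    continuous_const.add (continuous_id.smul continuous_const)
  have hVopen : IsOpen ((fun t : ℚ => φ₀ + t • ξ) ⁻¹' U) := hU.preimage hcont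
  have h0V : (0:ℚ) ∈ (fun t : ℚ => φ₀ + t • ξ) ⁻¹' U := by simp [hφ₀]
  have hnhds : ((fun t : ℚ => φ₀ + t • ξ) ⁻¹' U) ∈ nhdsWithin (0:ℚ) (Set.Ioi 0) :=
    nhdsWithin_le_nhds (hVopen.mem_nhds h0V)
  obtain ⟨t, htV, htpos⟩ :=
    Filter.nonempty_of_mem (Filter.inter_mem hnhds self_mem_nhdsWithin)
  have ht0 : t ≠ 0 := ne_of_gt htpos
  have hmemU : φ₀ + t • ξ ∈ U := htV
  have e1 : alexNorm Δ (φ₀ + t • ξ) = ∑ i, (φ₀ i + t * ξ i) * v i := by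
    simpa using hv _ hmemU
  have e2 : alexNorm Δ φ₀ = ∑ i, φ₀ i * v i := hv _ hφ₀
  have e3 := hinv t φ₀
  have hsum : ∑ i, (φ₀ i + t * ξ i) * v i = ∑ i, φ₀ i * v i := by
    rw [← e1, e3, e2]
  have hc : t * ∑ i, ξ i * v i = 0 := by
    have : ∑ i, (φ₀ i + t * ξ i) * v i = (∑ i, φ₀ i * v i) + t * ∑ i, ξ i * v i := by
      rw [Finset.mul_sum, ← Finset.sum_add_distrib]
      exact Finset.sum_congr rfl fun i _ => by ring
    rw [this] at hsum; linarith
  have hfv : f v = ∑ i, ξ i * v i := by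
    rw [hfx]; exact Finset.sum_congr rfl fun i _ => mul_comm _ _
  have : f v = 0 := by
    have := mul_eq_zero.mp hc
    rcases this with h | h
    · exact absurd h ht0
    · rw [hfv, h]
  exact hg0 (by simpa [hf] using this)


theorem thickness_ge_two_of_two_fibered_faces
    (n : ℕ) (hn : 2 ≤ n)
    (Δ : LaurentRing n)                     -- the Alexander polynomial of `N`
    (T : (Fin n → ℚ) → ℚ)                   -- the Thurston norm
    (Fib : Set (Fin n → ℚ))                 -- the set of fibered classes
    -- McMullen: `‖φ‖_A ≤ ‖φ‖_T`, with equality for fibered classes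
    (hMcM : ∀ φ : Fin n → ℚ, alexNorm Δ φ ≤ T φ)
    (heq : ∀ φ ∈ Fib, alexNorm Δ φ = T φ)
    -- two non-equivalent fibered faces, recorded by their dual vertices
    (v₁ v₂ : Fin n → ℚ) (U₁ U₂ : Set (Fin n → ℚ))
    (hU₁ : IsOpen U₁) (hU₁ne : U₁.Nonempty) (hU₁fib : U₁ ⊆ Fib)
    (hv₁ : ∀ φ ∈ U₁, T φ = ∑ i, φ i * v₁ i)
    (hU₂ : IsOpen U₂) (hU₂ne : U₂.Nonempty) (hU₂fib : U₂ ⊆ Fib)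
    (hv₂ : ∀ φ ∈ U₂, T φ = ∑ i, φ i * v₂ i)
    -- non-equivalence of the two faces: the dual vertices span a plane
    (hindep : LinearIndependent ℚ ![v₁, v₂]) :
    2 ≤ newtonDim Δ := by

  unfold newtonDim
  have h1 : v₁ ∈ Submodule.span ℚ {x : Fin n → ℚ | ∃ g ∈ Δ.coeff.support, ∃ h ∈ Δ.coeff.support,
      x = (fun i => (g i : ℚ)) - (fun i => (h i : ℚ))} :=
    vertex_mem_span Δ v₁ U₁ hU₁ hU₁ne
      (fun φ hφ => (heq φ (hU₁fib hφ)).trans (hv₁ φ hφ))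
  have h2 : v₂ ∈ Submodule.span ℚ {x : Fin n → ℚ | ∃ g ∈ Δ.coeff.support, ∃ h ∈ Δ.coeff.support,
      x = (fun i => (g i : ℚ)) - (fun i => (h i : ℚ))} :=
    vertex_mem_span Δ v₂ U₂ hU₂ hU₂ne
      (fun φ hφ => (heq φ (hU₂fib hφ)).trans (hv₂ φ hφ))
  have hle : Submodule.span ℚ (Set.range ![v₁, v₂]) ≤ Submodule.span ℚ
      {x : Fin n → ℚ | ∃ g ∈ Δ.coeff.support, ∃ h ∈ Δ.coeff.support,
        x = (fun i => (g i : ℚ)) - (fun i => (h i : ℚ))} := by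
    rw [Submodule.span_le]
    rintro x ⟨i, rfl⟩
    fin_cases i
    · exact h1
    · exact h2
  have hcard : Module.finrank ℚ (Submodule.span ℚ (Set.range ![v₁, v₂])) = 2 := by
    rw [finrank_span_eq_card hindep]; simp
  calc 2 = Module.finrank ℚ (Submodule.span ℚ (Set.range ![v₁, v₂])) := hcard.symm
    _ ≤ _ := Submodule.finrank_mono hle
end
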